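/- Let κ have uncountable cofinality. If φ and ψ are two stacked functions κ×ω → ℤ arising from stacks for the same coherent family Φ = {φ_f : f ∈ ω^κ}, then there exists δ < κ such that φ(α,i) = ψ(α,i) for all α > δ and all i. -/

import Mathlib

/-- `I_f = {(α,i) : i ≤ f(α)}` for `f ∈ ω^κ`. -/
def IK {K : Type} (f : K → ℕ) : Set (K × ℕ) := {x | x.2 ≤ f x.1}

/-- `φ` is a stacked function for the family `Φ`: there is a stack
`⟨f_j : j < ω⟩` (so `⋃_j I_{f_j} = κ × ω`) with `φ(x) = φ_{f_k}(x)` where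
`k` is least with `x ∈ I_{f_k}`. -/
def IsStacked {K : Type} (Φ : (K → ℕ) → K × ℕ → ℤ) (φ : K × ℕ → ℤ) : Prop :=
  ∃ F : ℕ → K → ℕ, ∀ x : K × ℕ, ∃ hx : ∃ j, x.2 ≤ F j x.1,
    φ x = Φ (F (Nat.find hx)) x

/-- Any two stacked functions for a coherent family over `κ` of uncountable
cofinality agree above some `δ < κ`. -/
theorem stacked_functions_eventually_agree
    (K : Type) [LinearOrder K] [WellFoundedLT K]
    (hcof : Cardinal.aleph0 < (Ordinal.type ((· < ·) : K → K → Prop)).cof)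
    (Φ : (K → ℕ) → K × ℕ → ℤ)
    (hcoh : ∀ f g : K → ℕ, {x | x ∈ IK f ∩ IK g ∧ Φ f x ≠ Φ g x}.Finite)
    (φ ψ : K × ℕ → ℤ) (hφ : IsStacked Φ φ) (hψ : IsStacked Φ ψ) :
    ∃ δ : K, ∀ α : K, δ < α → ∀ i : ℕ, φ (α, i) = ψ (α, i) := by
  obtain ⟨F, hF⟩ := hφ
  obtain ⟨G, hG⟩ := hψ
  -- the set of "bad" first coordinates
  set S : Set K := ⋃ p : ℕ × ℕ,
    (fun x : K × ℕ => x.1) '' {x | x ∈ IK (F p.1) ∩ IK (G p.2) ∧ Φ (F p.1) x ≠ Φ (G p.2) x}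
    with hS
  have hScount : S.Countable := by
    apply Set.countable_iUnion
    intro p
    exact ((hcoh (F p.1) (G p.2)).image _).countable
  have hmk : Cardinal.mk S < Ordinal.cof (Ordinal.type ((· < ·) : K → K → Prop)) :=
    lt_of_le_of_lt (Set.Countable.le_aleph0 hScount) hcof
  obtain ⟨δ, hδ⟩ := not_isCofinal_iff.1 (fun hc => absurd (Order.cof_le hc) (not_le_of_gt (by rwa [Ordinal.cof_type] at hmk)))
  refine ⟨δ, fun α hα i => ?_⟩
  have hαS : α ∉ S := fun h => absurd (hδ α h) (not_lt_of_gt hα)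
  obtain ⟨hx1, he1⟩ := hF (α, i)
  obtain ⟨hx2, he2⟩ := hG (α, i)
  rw [he1, he2]
  by_contra hne
  apply hαS
  refine Set.mem_iUnion.2 ⟨(Nat.find hx1, Nat.find hx2), ⟨(α, i), ⟨⟨?_, ?_⟩, hne⟩, rfl⟩⟩
  · exact Nat.find_spec hx1
  · exact Nat.find_spec hx2
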